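/- Let Φ be a vector in ℂ^(V × {0,…,d−1}) satisfying W Φ = e^{iφ} Φ for some real φ with 0 < φ < π, and set a_u = ⟨ψ_u, Φ⟩ for each vertex u. Then the vector (a_u)_{u∈V} satisfies the eigenvalue equation of the normalized adjacency matrix with eigenvalue cos φ: for every u ∈ V, Σ_{v∈V} A(u,v)·a_v = cos(φ)·a_u. -/

import Mathlib

open scoped InnerProductSpace
open Complex

/-- The coin state `ψ_u = (1/√d) Σ_g e_{(u,g)}`. -/
noncomputable def psiState (V : Type*) [Fintype V] [DecidableEq V] (d : ℕ) (u : V) :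
    EuclideanSpace ℂ (V × Fin d) :=
  WithLp.toLp 2 (fun x : V × Fin d => if x.1 = u then ((1 / Real.sqrt d : ℝ) : ℂ) else 0)

/-- The coin operator `C = 2 Σ_u |ψ_u⟩⟨ψ_u| − I` applied to a vector. -/
noncomputable def coinOp {V : Type*} [Fintype V] [DecidableEq V] {d : ℕ}
    (Φ : EuclideanSpace ℂ (V × Fin d)) : EuclideanSpace ℂ (V × Fin d) :=
  (2 : ℂ) • (∑ u : V, ⟪psiState V d u, Φ⟫_ℂ • psiState V d u) - Φ

/-- The flip-flop walk operator `W = S C`, where `S e_x = e_{σ(x)}`. -/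
noncomputable def walkOp {V : Type*} [Fintype V] [DecidableEq V] {d : ℕ}
    (σ : V × Fin d → V × Fin d) (Φ : EuclideanSpace ℂ (V × Fin d)) :
    EuclideanSpace ℂ (V × Fin d) :=
  WithLp.toLp 2 (fun x => coinOp Φ (σ x))

/-- The normalized adjacency matrix entry `A(u,v) = |{g : (σ(u,g)).1 = v}| / d`. -/
noncomputable def adjEntry {V : Type*} [Fintype V] [DecidableEq V] {d : ℕ}
    (σ : V × Fin d → V × Fin d) (u v : V) : ℝ :=
  (Finset.univ.filter (fun g : Fin d => (σ (u, g)).1 = v)).card / d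

/-- If `W Φ = e^{iφ} Φ` with `0 < φ < π` and `a_u = ⟨ψ_u, Φ⟩`, then
`Σ_v A(u,v) a_v = cos(φ) a_u` for every vertex `u`. -/
theorem walk_eigenvector_gives_adjacency_eigenvector
    {V : Type*} [Fintype V] [DecidableEq V] [Nonempty V] {d : ℕ} (hd : 1 ≤ d)
    (σ : V × Fin d → V × Fin d) (hσ : ∀ x, σ (σ x) = x)
    (Φ : EuclideanSpace ℂ (V × Fin d)) (φ : ℝ) (hφ0 : 0 < φ) (hφπ : φ < Real.pi)
    (hW : walkOp σ Φ = Complex.exp (φ * Complex.I) • Φ)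
    (a : V → ℂ) (ha : ∀ u, a u = ⟪psiState V d u, Φ⟫_ℂ) :
    ∀ u : V, ∑ v : V, (adjEntry σ u v : ℂ) * a v = (Real.cos φ : ℂ) * a u := by
  intro u
  set lam := Complex.exp (↑φ * Complex.I) with hlam
  have hlam0 : lam ≠ 0 := Complex.exp_ne_zero _
  have hd0 : (0:ℝ) < d := by exact_mod_cast hd
  set s : ℂ := ((Real.sqrt d : ℝ) : ℂ) with hs
  have hsne : s ≠ 0 := by
    simp only [hs, Complex.ofReal_ne_zero]
    positivity
  have hss : s * s = (d : ℂ) := by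
    rw [hs, ← Complex.ofReal_mul, Real.mul_self_sqrt hd0.le]
    norm_num
  have hdne : (d : ℂ) ≠ 0 := by rw [← hss]; exact mul_ne_zero hsne hsne
  -- a v in terms of Φ
  have haux : ∀ v : V, s * a v = ∑ g : Fin d, Φ (v, g) := by
    intro v
    rw [ha v, PiLp.inner_apply]
    simp only [RCLike.inner_apply, psiState]
    rw [Fintype.sum_prod_type, Finset.mul_sum]
    rw [Finset.sum_eq_single v]
    · simp only [if_pos rfl, ↓reduceIte, map_div₀, map_one, Complex.conj_ofReal, Finset.mul_sum]
      refine Finset.sum_congr rfl fun g _ => ?_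
      rw [Complex.ofReal_div, Complex.ofReal_one]
      rw [← hs]; field_simp
    · intro w _ hw
      simp [hw]
    · simp
  -- the coin operator pointwise
  have hcoin : ∀ x : V × Fin d, coinOp Φ x = 2 * s⁻¹ * a x.1 - Φ x := by
    intro x
    have : coinOp Φ x
        = (2:ℂ) * (∑ v : V, ⟪psiState V d v, Φ⟫_ℂ * psiState V d v x) - Φ x := by
      have hsum : ((∑ v : V, ⟪psiState V d v, Φ⟫_ℂ • psiState V d v :
          EuclideanSpace ℂ (V × Fin d)) x)
          = ∑ v : V, (⟪psiState V d v, Φ⟫_ℂ • psiState V d v) x :=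
        by rw [WithLp.ofLp_sum, Finset.sum_apply]
      calc coinOp Φ x = (2:ℂ) * ((∑ v : V, ⟪psiState V d v, Φ⟫_ℂ • psiState V d v :
              EuclideanSpace ℂ (V × Fin d)) x) - Φ x := rfl
        _ = (2:ℂ) * (∑ v : V, ⟪psiState V d v, Φ⟫_ℂ * psiState V d v x) - Φ x := by
              rw [hsum]; simp [smul_eq_mul]
    rw [this]
    have : ∑ v : V, ⟪psiState V d v, Φ⟫_ℂ * psiState V d v x
        = ∑ v : V, (if x.1 = v then a v * s⁻¹ else 0) := by
      refine Finset.sum_congr rfl fun v _ => ?_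
      rw [← ha v]
      simp only [psiState]
      split_ifs with h
      · rw [Complex.ofReal_div, Complex.ofReal_one]
        ring
      · simp
    rw [this, Finset.sum_ite_eq Finset.univ x.1 (fun v => a v * s⁻¹)]
    simp only [Finset.mem_univ, if_pos]
    ring
  have hWpt : ∀ x, coinOp Φ (σ x) = lam * Φ x := by
    intro x
    have := congrArg (fun f : EuclideanSpace ℂ (V × Fin d) => f x) hW
    simpa [walkOp] using this
  set B : ℂ := ∑ g : Fin d, Φ (σ (u, g)) with hB
  -- Equation 1 : s * a u = lam * B
  have eq1 : s * a u = lam * B := by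
    have h1 : ∀ g : Fin d, 2 * s⁻¹ * a u - Φ (u, g) = lam * Φ (σ (u, g)) := by
      intro g
      have := hWpt (σ (u, g))
      rw [hσ (u, g)] at this
      rw [← this, hcoin (u, g)]
    have h2 : ∑ g : Fin d, (2 * s⁻¹ * a u - Φ (u, g)) = ∑ g : Fin d, lam * Φ (σ (u, g)) :=
      Finset.sum_congr rfl fun g _ => h1 g
    rw [Finset.sum_sub_distrib, Finset.sum_const, ← haux u, ← Finset.mul_sum, ← hB] at h2
    have hcard : (Finset.univ : Finset (Fin d)).card = d := by simp
    rw [hcard, nsmul_eq_mul] at h2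
    have : (d : ℂ) * (2 * s⁻¹ * a u) - s * a u = s * a u := by
      rw [← hss]
      field_simp
      ring
    rw [this] at h2
    exact h2
  -- Equation 2
  set T : ℂ := ∑ g : Fin d, a ((σ (u, g)).1) with hT
  have eq2 : 2 * s⁻¹ * T - B = lam * (s * a u) := by
    have h1 : ∀ g : Fin d, 2 * s⁻¹ * a ((σ (u, g)).1) - Φ (σ (u, g)) = lam * Φ (u, g) := by
      intro g
      rw [← hWpt (u, g), hcoin (σ (u, g))]
    have h2 : ∑ g : Fin d, (2 * s⁻¹ * a ((σ (u, g)).1) - Φ (σ (u, g)))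
        = ∑ g : Fin d, lam * Φ (u, g) :=
      Finset.sum_congr rfl fun g _ => h1 g
    rw [Finset.sum_sub_distrib, ← Finset.mul_sum, ← Finset.mul_sum, ← hB, ← hT,
      ← haux u] at h2
    exact h2
  -- combine: T = d * cos φ * a u
  have hcos : lam + lam⁻¹ = 2 * (Real.cos φ : ℂ) := by
    have h2 : lam⁻¹ = Complex.exp (-(↑φ * Complex.I)) := by
      rw [hlam, ← Complex.exp_neg]
    rw [hlam, h2, neg_mul_eq_neg_mul, Complex.exp_mul_I, Complex.exp_mul_I,
      Complex.cos_neg, Complex.sin_neg, Complex.ofReal_cos]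
    ring
  have hTval : T = (d : ℂ) * ((Real.cos φ : ℂ) * a u) := by
    have hBval : B = lam⁻¹ * (s * a u) := by
      rw [eq1, inv_mul_cancel_left₀ hlam0]
    rw [hBval] at eq2
    have h3 : 2 * s⁻¹ * T = (lam + lam⁻¹) * (s * a u) := by linear_combination eq2
    rw [hcos] at h3
    field_simp at h3
    rw [← hss, Complex.ofReal_cos]
    rw [Complex.ofReal_cos] at h3; linear_combination h3
  -- final rewriting of the adjacency sum
  have hfib : ∑ v : V, ((Finset.univ.filter (fun g : Fin d => (σ (u, g)).1 = v)).card : ℂ) * a v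
      = T := by
    rw [hT]
    rw [← Finset.sum_fiberwise (Finset.univ : Finset (Fin d))
      (fun g : Fin d => (σ (u, g)).1) (fun g : Fin d => a ((σ (u, g)).1))]
    refine Finset.sum_congr rfl fun v _ => ?_
    have hcg : ∀ g ∈ Finset.univ.filter (fun g : Fin d => (σ (u, g)).1 = v),
        a ((σ (u, g)).1) = a v := fun g hg => by
      rw [(Finset.mem_filter.mp hg).2]
    rw [Finset.sum_congr rfl hcg, Finset.sum_const, nsmul_eq_mul]
  have hadj : ∀ v : V, (adjEntry σ u v : ℂ)
      = ((Finset.univ.filter (fun g : Fin d => (σ (u, g)).1 = v)).card : ℂ) / d := by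
    intro v
    rw [adjEntry]
    push_cast
    ring
  calc ∑ v : V, (adjEntry σ u v : ℂ) * a v
      = (∑ v : V, ((Finset.univ.filter (fun g : Fin d => (σ (u, g)).1 = v)).card : ℂ) * a v)
          / d := by
        rw [Finset.sum_div]
        exact Finset.sum_congr rfl fun v _ => by rw [hadj v]; ring
    _ = T / d := by rw [hfib]
    _ = (Real.cos φ : ℂ) * a u := by rw [hTval]; field_simp
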